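/- For a finite connected network with positive edge resistances, the effective resistance between u and v equals the infimum over finite families of self-avoiding paths P₁,…,Pₙ from u to v, weights α₁,…,αₙ > 0 summing to 1, and per-path edge resistances r_{e,P_k} > 0 satisfying ∑_{k : e ∈ P_k} 1/r_{e,P_k} ≤ 1/r_e for each edge e, of the quantity ∑_k α_k² ∑_{e ∈ P_k} r_{e,P_k}; moreover the infimum is achieved. -/

import Mathlib

open Finset

/-- A unit flow from `u` to `v` on the graph `G`: an antisymmetric function on
directed edges, vanishing off the edges of `G`, with zero divergence away
from `u, v` and strength `1` at `u`. -/
def IsUnitFlow {V : Type*} [Fintype V] (G : SimpleGraph V) (u v : V)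
    (θ : V → V → ℝ) : Prop :=
  (∀ x y, θ x y = -θ y x) ∧
  (∀ x y, ¬ G.Adj x y → θ x y = 0) ∧
  (∀ x, x ≠ u → x ≠ v → ∑ y, θ x y = 0) ∧
  ∑ y, θ u y = 1

/-- Dirichlet energy of a flow with respect to edge resistances `r`
(each unordered edge is counted twice, whence the factor `1/2`). -/
noncomputable def flowEnergy {V : Type*} [Fintype V] (r : Sym2 V → ℝ)
    (θ : V → V → ℝ) : ℝ :=
  (1 / 2) * ∑ x, ∑ y, (θ x y) ^ 2 * r s(x, y)

/-- The effective resistance between `u` and `v`: the infimum of the Dirichlet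
energy over unit flows from `u` to `v`. -/
noncomputable def effRes {V : Type*} [Fintype V] (G : SimpleGraph V)
    (r : Sym2 V → ℝ) (u v : V) : ℝ :=
  sInf (flowEnergy r '' {θ | IsUnitFlow G u v θ})

/-- The set of values `∑ₖ αₖ² ∑_{e ∈ Pₖ} r_{e,Pₖ}` over finite families of
self-avoiding paths `P₁, …, Pₙ` from `u` to `v`, weights `αₖ > 0` summing to `1`,
and per-path edge resistances `r_{e,Pₖ} > 0` satisfying
`∑_{k : e ∈ Pₖ} 1/r_{e,Pₖ} ≤ 1/r_e` for each edge `e`. -/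
noncomputable def pathValues {V : Type*} [Fintype V] [DecidableEq V]
    (G : SimpleGraph V) (r : Sym2 V → ℝ) (u v : V) : Set ℝ :=
  {x | ∃ (n : ℕ) (P : Fin n → G.Walk u v) (α : Fin n → ℝ) (ρ : Fin n → Sym2 V → ℝ),
    (∀ k, (P k).IsPath) ∧
    (∀ k, 0 < α k) ∧ (∑ k, α k = 1) ∧
    (∀ k e, 0 < ρ k e) ∧
    (∀ e ∈ G.edgeSet, (∑ k, if e ∈ (P k).edges then (ρ k e)⁻¹ else 0) ≤ (r e)⁻¹) ∧
    x = ∑ k, (α k) ^ 2 * ∑ e ∈ (P k).edges.toFinset, ρ k e}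

set_option linter.unusedSectionVars false
set_option maxHeartbeats 2000000

open SimpleGraph

section EffResAux

variable {V : Type*} [Fintype V] [DecidableEq V] {G : SimpleGraph V}

@[simp] lemma dart_mk_toProd {p : V × V} (h : G.Adj p.1 p.2) :
    (SimpleGraph.Dart.mk p h).toProd = p := rfl

/-- net number of times walk `W` traverses the directed edge `(a,b)`. -/
noncomputable def pf {x y : V} (W : G.Walk x y) (a b : V) : ℝ :=
  ((W.darts.countP (fun d => d.toProd = (a, b))) : ℝ)
  - ((W.darts.countP (fun d => d.toProd = (b, a))) : ℝ)

lemma pf_def {x y : V} (W : G.Walk x y) (a b : V) : pf W a b =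
    ((W.darts.countP (fun d => d.toProd = (a, b))) : ℝ)
    - ((W.darts.countP (fun d => d.toProd = (b, a))) : ℝ) := rfl

lemma pf_anti {x y : V} (W : G.Walk x y) (a b : V) : pf W a b = - pf W b a := by
  simp [pf]

lemma pf_self {x y : V} (W : G.Walk x y) (a : V) : pf W a a = 0 := by simp [pf]

lemma adj_of_pf_ne_zero {x y : V} {W : G.Walk x y} {a b : V} (h : pf W a b ≠ 0) :
    G.Adj a b := by
  by_contra hadj
  apply h
  have h1 : W.darts.countP (fun d => d.toProd = (a, b)) = 0 := by
    rw [List.countP_eq_zero]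
    rintro d hd
    simp only [decide_eq_true_eq]
    rintro hc
    exact hadj (by have := d.adj; rwa [hc] at this)
  have h2 : W.darts.countP (fun d => d.toProd = (b, a)) = 0 := by
    rw [List.countP_eq_zero]
    rintro d hd
    simp only [decide_eq_true_eq]
    rintro hc
    exact hadj (by have := d.adj; rw [hc] at this; exact this.symm)
  simp [pf, h1, h2]

lemma pf_cons {x c y : V} (h : G.Adj x c) (W : G.Walk c y) (a b : V) :
    pf (SimpleGraph.Walk.cons h W) a b =
      ((if (x, c) = (a, b) then (1:ℝ) else 0) - (if (x, c) = (b, a) then 1 else 0))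
        + pf W a b := by
  simp only [pf, SimpleGraph.Walk.darts_cons, List.countP_cons, decide_eq_true_eq,
    dart_mk_toProd]
  push_cast [apply_ite (fun (n : ℕ) => (n : ℝ))]
  split_ifs <;> ring

lemma sum_pf {x y : V} (W : G.Walk x y) (a : V) :
    ∑ b, pf W a b = (if a = x then 1 else 0) - (if a = y then 1 else 0) := by
  induction W with
  | nil => simp [pf]
  | @cons x c y h W ih =>
    simp only [pf_cons, Finset.sum_add_distrib, ih, Finset.sum_sub_distrib]
    have h1 : ∑ b, (if (x, c) = (a, b) then (1:ℝ) else 0) = if a = x then 1 else 0 := by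
      simp only [Prod.mk.injEq, ite_and, eq_comm (a := x) (b := a)]
      by_cases hax : a = x
      · simp [hax, Finset.sum_ite_eq]
      · simp [hax]
    have h2 : ∑ b, (if (x, c) = (b, a) then (1:ℝ) else 0) = if a = c then 1 else 0 := by
      simp only [Prod.mk.injEq, ite_and, eq_comm (a := c) (b := a)]
      by_cases hac : a = c
      · simp [hac, Finset.sum_ite_eq, eq_comm]
      · simp [hac]
    rw [h1, h2]
    ring

lemma darts_nodup_of_trail {x y : V} {W : G.Walk x y} (ht : W.IsTrail) :
    W.darts.Nodup :=
  (ht.edges_nodup).of_map _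

lemma pf_dart {x y : V} {W : G.Walk x y} (ht : W.IsTrail) {d : G.Dart}
    (hd : d ∈ W.darts) : pf W d.toProd.1 d.toProd.2 = 1 := by
  rw [pf_def]
  have h1 : W.darts.countP (fun d' => d'.toProd = (d.toProd.1, d.toProd.2)) = 1 := by
    have : (fun d' : G.Dart => decide (d'.toProd = (d.toProd.1, d.toProd.2)))
        = (fun d' => d' == d) := by
      funext d'
      show decide (d'.toProd = (d.toProd.1, d.toProd.2)) = decide (d' = d)
      rw [decide_eq_decide]
      constructor
      · intro h; exact SimpleGraph.Dart.ext _ _ (by rw [h])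
      · rintro rfl; rfl
    rw [this]
    exact List.count_eq_one_of_mem (darts_nodup_of_trail ht) hd
  have h2 : W.darts.countP (fun d' => d'.toProd = (d.toProd.2, d.toProd.1)) = 0 := by
    rw [List.countP_eq_zero]
    intro d' hd'
    simp only [decide_eq_true_eq]
    intro hc
    have hedge : d'.edge = d.edge := by
      unfold SimpleGraph.Dart.edge
      rw [hc]
      exact Sym2.eq_swap
    have : d' = d := List.inj_on_of_nodup_map (ht.edges_nodup) hd' hd hedge
    rw [this] at hc
    have := d.adj
    rw [show d.toProd.1 = d.toProd.2 from congrArg Prod.fst hc] at this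
    exact G.irrefl this
  rw [h1, h2]
  norm_num

lemma pf_cases {x y : V} {W : G.Walk x y} (ht : W.IsTrail) (a b : V) :
    pf W a b = 0 ∨
    ((∃ d ∈ W.darts, d.toProd = (a, b)) ∧ pf W a b = 1) ∨
    ((∃ d ∈ W.darts, d.toProd = (b, a)) ∧ pf W a b = -1) := by
  by_cases h1 : ∃ d ∈ W.darts, d.toProd = (a, b)
  · refine Or.inr (Or.inl ⟨h1, ?_⟩)
    obtain ⟨d, hd, hdp⟩ := h1
    have := pf_dart ht hd
    rw [hdp] at this
    exact this
  by_cases h2 : ∃ d ∈ W.darts, d.toProd = (b, a)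
  · refine Or.inr (Or.inr ⟨h2, ?_⟩)
    obtain ⟨d, hd, hdp⟩ := h2
    have := pf_dart ht hd
    rw [hdp] at this
    rw [pf_anti, this]
  · refine Or.inl ?_
    rw [pf_def]
    have c1 : W.darts.countP (fun d => d.toProd = (a, b)) = 0 := by
      rw [List.countP_eq_zero]
      intro d hd
      simp only [decide_eq_true_eq]
      exact fun hc => h1 ⟨d, hd, hc⟩
    have c2 : W.darts.countP (fun d => d.toProd = (b, a)) = 0 := by
      rw [List.countP_eq_zero]
      intro d hd
      simp only [decide_eq_true_eq]
      exact fun hc => h2 ⟨d, hd, hc⟩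
    rw [c1, c2]; norm_num

lemma edge_mem_iff_exists_dart {x y : V} (W : G.Walk x y) (a b : V) :
    s(a, b) ∈ W.edges ↔ (∃ d ∈ W.darts, d.toProd = (a, b)) ∨
      (∃ d ∈ W.darts, d.toProd = (b, a)) := by
  rw [SimpleGraph.Walk.edges, List.mem_map]
  constructor
  · rintro ⟨d, hd, hde⟩
    unfold SimpleGraph.Dart.edge at hde
    rw [Sym2.eq_iff] at hde
    rcases hde with ⟨h1, h2⟩ | ⟨h1, h2⟩
    · exact Or.inl ⟨d, hd, Prod.ext h1 h2⟩
    · exact Or.inr ⟨d, hd, Prod.ext h1 h2⟩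
  · rintro (⟨d, hd, hdp⟩ | ⟨d, hd, hdp⟩) <;>
      refine ⟨d, hd, ?_⟩ <;> unfold SimpleGraph.Dart.edge <;> rw [hdp]
    exact Sym2.eq_swap

lemma concat_isPath {a w : V} {W : G.Walk a w} (hp : W.IsPath) {b : V}
    (h : G.Adj w b) (hb : b ∉ W.support) : (W.concat h).IsPath := by
  have key : (W.concat h) = (SimpleGraph.Walk.cons h.symm W.reverse).reverse := by
    rw [SimpleGraph.Walk.reverse_cons, SimpleGraph.Walk.reverse_reverse]
    rfl
  rw [key]
  apply SimpleGraph.Walk.IsPath.reverse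
  rw [SimpleGraph.Walk.cons_isPath_iff]
  refine ⟨hp.reverse, ?_⟩
  rw [SimpleGraph.Walk.support_reverse, List.mem_reverse]
  exact hb

lemma exists_dart_snd_end {x y : V} (W : G.Walk x y) (h : ¬ W.Nil) :
    ∃ d ∈ W.darts, d.toProd.2 = y := by
  induction W with
  | nil => simp at h
  | @cons x c y hadj W ih =>
    by_cases hn : W.Nil
    · have : c = y := hn.eq
      subst this
      exact ⟨SimpleGraph.Dart.mk (x, c) hadj, by simp, rfl⟩
    · obtain ⟨d, hd, hd2⟩ := ih hn
      exact ⟨d, by simp [hd], hd2⟩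

lemma exists_dart_fst_start {x y : V} (W : G.Walk x y) (h : ¬ W.Nil) :
    ∃ d ∈ W.darts, d.toProd.1 = x := by
  rw [SimpleGraph.Walk.not_nil_iff] at h
  obtain ⟨u, hadj, q, rfl⟩ := h
  exact ⟨SimpleGraph.Dart.mk (x, u) hadj, by simp, rfl⟩

lemma dart_fst_ne_end_of_path {x y : V} {W : G.Walk x y} (hp : W.IsPath)
    (hxy : x ≠ y) {d : G.Dart} (hd : d ∈ W.darts) : d.toProd.1 ≠ y := by
  induction W with
  | nil => simp at hd
  | @cons x c y hadj W ih =>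
    rw [SimpleGraph.Walk.cons_isPath_iff] at hp
    rw [SimpleGraph.Walk.darts_cons, List.mem_cons] at hd
    rcases hd with rfl | hd
    · intro hc
      exact hp.2 (hc ▸ SimpleGraph.Walk.end_mem_support W)
    · by_cases hcy : c = y
      · subst hcy
        rw [SimpleGraph.Walk.isPath_iff_eq_nil] at *
        · simp [hp.1] at hd
      · exact ih hp.1 hcy hd

/-- Acyclicity of a flow: no cycle all of whose darts carry positive flow. -/
def NoPosCycle (G : SimpleGraph V) (θ : V → V → ℝ) : Prop :=
  ∀ (x : V) (C : G.Walk x x), C.IsCycle →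
    ¬ (∀ d ∈ C.darts, 0 < θ d.toProd.1 d.toProd.2)

lemma chain_step (θ : V → V → ℝ)
    (hanti : ∀ a b, θ a b = - θ b a)
    (hsupp : ∀ a b, ¬ G.Adj a b → θ a b = 0)
    (hacyc : NoPosCycle G θ)
    {src snk : V}
    (hext : ∀ a, a ≠ src → a ≠ snk → (∃ z, 0 < θ z a) → ∃ w, 0 < θ a w)
    {a : V} (W : G.Walk src a) (hp : W.IsPath) (hnil : ¬ W.Nil)
    (hpos : ∀ d ∈ W.darts, 0 < θ d.toProd.1 d.toProd.2)
    (ha : a ≠ snk) :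
    ∃ (w : V) (haw : G.Adj a w), 0 < θ a w ∧ (W.concat haw).IsPath := by
  have hasrc : a ≠ src := by
    rintro rfl
    rw [SimpleGraph.Walk.isPath_iff_eq_nil] at hp
    rw [hp] at hnil
    simp at hnil
  have hin : ∃ z, 0 < θ z a := by
    obtain ⟨d, hd, hd2⟩ := exists_dart_snd_end W hnil
    exact ⟨d.toProd.1, hd2 ▸ hpos d hd⟩
  obtain ⟨w, hw⟩ := hext a hasrc ha hin
  have haw : G.Adj a w := by
    by_contra hc
    rw [hsupp a w hc] at hw
    exact lt_irrefl _ hw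
  refine ⟨w, haw, hw, ?_⟩
  apply concat_isPath hp haw
  intro hmem
  -- w is in the support: extract a positive cycle
  set p := W.dropUntil w hmem with hpdef
  have hppath : p.IsPath := hp.dropUntil hmem
  have hpd : ∀ d ∈ p.darts, d ∈ W.darts := fun d hd =>
    W.darts_dropUntil_subset hmem hd
  have hwa : w ≠ a := fun hcc => G.irrefl (hcc ▸ haw)
  have hedge : s(a, w) ∉ p.edges := by
    intro he
    rw [edge_mem_iff_exists_dart] at he
    rcases he with ⟨d, hd, hdp⟩ | ⟨d, hd, hdp⟩
    · exact dart_fst_ne_end_of_path hppath hwa hd (by rw [hdp])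
    · have := hpos d (hpd d hd)
      rw [hdp] at this
      have h2 := hanti a w
      rw [h2] at hw
      simp only at this hw
      linarith
  have hcyc : (SimpleGraph.Walk.cons haw p).IsCycle :=
    (SimpleGraph.Walk.cons_isCycle_iff p haw).2 ⟨hppath, hedge⟩
  apply hacyc a (SimpleGraph.Walk.cons haw p) hcyc
  intro d hd
  rw [SimpleGraph.Walk.darts_cons, List.mem_cons] at hd
  rcases hd with rfl | hd
  · exact hw
  · exact hpos d (hpd d hd)

lemma chain_aux (θ : V → V → ℝ)
    (hanti : ∀ a b, θ a b = - θ b a)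
    (hsupp : ∀ a b, ¬ G.Adj a b → θ a b = 0)
    (hacyc : NoPosCycle G θ)
    {src snk : V}
    (hext : ∀ a, a ≠ src → a ≠ snk → (∃ z, 0 < θ z a) → ∃ w, 0 < θ a w) :
    ∀ (k : ℕ) (a : V) (W : G.Walk src a), W.IsPath → ¬ W.Nil →
      (∀ d ∈ W.darts, 0 < θ d.toProd.1 d.toProd.2) →
      Fintype.card V ≤ W.length + 1 + k →
      ∃ W' : G.Walk src snk, W'.IsPath ∧ ¬ W'.Nil ∧
        ∀ d ∈ W'.darts, 0 < θ d.toProd.1 d.toProd.2 := by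
  intro k
  induction k with
  | zero =>
    intro a W hp hnil hpos hcard
    by_cases hsnk : a = snk
    · subst hsnk; exact ⟨W, hp, hnil, hpos⟩
    · exfalso
      obtain ⟨w, haw, hw, hp2⟩ :=
        chain_step θ hanti hsupp hacyc hext W hp hnil hpos hsnk
      have hlen : (W.concat haw).support.length ≤ Fintype.card V :=
        hp2.support_nodup.length_le_card
      rw [SimpleGraph.Walk.length_support, SimpleGraph.Walk.length_concat] at hlen
      omega
  | succ k ih =>
    intro a W hp hnil hpos hcard
    by_cases hsnk : a = snk
    · subst hsnk; exact ⟨W, hp, hnil, hpos⟩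
    · obtain ⟨w, haw, hw, hp2⟩ :=
        chain_step θ hanti hsupp hacyc hext W hp hnil hpos hsnk
      apply ih w (W.concat haw) hp2
      · rw [SimpleGraph.Walk.not_nil_iff_lt_length, SimpleGraph.Walk.length_concat]
        omega
      · intro d hd
        simp only [SimpleGraph.Walk.darts_concat, List.concat_eq_append, List.mem_append, List.mem_singleton] at hd
        rcases hd with hd | hd
        · exact hpos d hd
        · subst hd
          exact hw
      · rw [SimpleGraph.Walk.length_concat]
        omega

lemma isCycle_reverse {x : V} {p : G.Walk x x} (hp : p.IsCycle) : p.reverse.IsCycle := by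
  rw [SimpleGraph.Walk.isCycle_def] at hp ⊢
  obtain ⟨ht, hne, hnodup⟩ := hp
  refine ⟨ht.reverse, fun hc => hne (by simpa using congrArg SimpleGraph.Walk.reverse hc), ?_⟩
  rw [SimpleGraph.Walk.support_reverse, List.tail_reverse,
    List.nodup_reverse]
  -- know : p.support.tail.Nodup ; goal : p.support.dropLast.Nodup
  have hsup := p.support_eq_cons
  set t := p.support.tail with htdef
  have htne : t ≠ [] := by
    intro hc
    apply hne
    have : p.support = [x] := by rw [hsup, hc]
    rw [← SimpleGraph.Walk.nil_iff_support_eq] at this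
    exact this.eq_nil
  have h0 : (x :: t).getLast? = some x := by
    rw [← hsup, List.getLast?_eq_getLast p.support_ne_nil]
    exact congrArg some p.getLast_support
  have h1 : (x :: t).getLast (List.cons_ne_nil x t) = x := by
    rw [List.getLast?_eq_getLast (List.cons_ne_nil x t)] at h0
    exact Option.some_injective _ h0
  have hlast : t.getLast htne = x := (List.getLast_cons htne).symm.trans h1
  have ht2 : t.dropLast ++ [x] = t := by
    rw [← hlast]
    exact List.dropLast_append_getLast htne
  rw [hsup, List.dropLast_cons_of_ne_nil htne, List.nodup_cons]
  rw [← ht2, List.nodup_append] at hnodup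
  obtain ⟨h1, _, h3⟩ := hnodup
  exact ⟨fun hc => h3 x hc x (List.mem_singleton_self x) rfl, h1⟩

lemma sum_sum_anti {θ : V → V → ℝ} (hanti : ∀ a b, θ a b = - θ b a) :
    ∑ x, ∑ y, θ x y = 0 := by
  have h1 : ∑ x, ∑ y, θ x y = ∑ y, ∑ x, θ x y := Finset.sum_comm
  have h2 : ∑ y : V, ∑ x : V, θ x y = - ∑ x, ∑ y, θ x y := by
    rw [← Finset.sum_neg_distrib]
    apply Finset.sum_congr rfl
    intro y _
    rw [← Finset.sum_neg_distrib]
    apply Finset.sum_congr rfl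
    intro x _
    exact hanti x y
  linarith [h1, h2]

-- (B) divergence at v
lemma div_at_v {θ : V → V → ℝ} {u v : V} (huv : u ≠ v)
    (hanti : ∀ a b, θ a b = - θ b a)
    (hdiv : ∀ x, x ≠ u → x ≠ v → ∑ y, θ x y = 0) :
    ∑ y, θ v y = - ∑ y, θ u y := by
  have h0 := sum_sum_anti hanti
  have h1 : ∑ x, ∑ y, θ x y = ∑ x ∈ ({u, v} : Finset V), ∑ y, θ x y := by
    symm
    apply Finset.sum_subset (Finset.subset_univ _)
    intro x _ hx
    simp only [Finset.mem_insert, Finset.mem_singleton, not_or] at hx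
    exact hdiv x hx.1 hx.2
  rw [Finset.sum_pair huv] at h1
  linarith [h0, h1]

lemma exists_pos_of_sum_zero_of_neg {g : V → ℝ} (hsum : ∑ y, g y = 0)
    {z : V} (hz : g z < 0) : ∃ w, 0 < g w := by
  by_contra hc
  push_neg at hc
  have : ∑ y, g y < ∑ _y : V, (0:ℝ) :=
    Finset.sum_lt_sum (fun i _ => hc i) ⟨z, Finset.mem_univ z, hz⟩
  simp [hsum] at this

lemma exists_neg_of_sum_zero_of_pos {g : V → ℝ} (hsum : ∑ y, g y = 0)
    {z : V} (hz : 0 < g z) : ∃ w, g w < 0 := by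
  by_contra hc
  push_neg at hc
  have : ∑ _y : V, (0:ℝ) < ∑ y, g y :=
    Finset.sum_lt_sum (fun i _ => hc i) ⟨z, Finset.mem_univ z, hz⟩
  simp [hsum] at this

lemma exists_neg_of_sum_neg {g : V → ℝ} (hsum : ∑ y, g y < 0) : ∃ w, g w < 0 := by
  by_contra hc
  push_neg at hc
  have : (0:ℝ) ≤ ∑ y, g y := Finset.sum_nonneg (fun i _ => hc i)
  linarith

lemma exists_pos_of_sum_pos {g : V → ℝ} (hsum : 0 < ∑ y, g y) : ∃ w, 0 < g w := by
  by_contra hc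
  push_neg at hc
  have : ∑ y, g y ≤ 0 := Finset.sum_nonpos (fun i _ => hc i)
  linarith

lemma decomp (u v : V) (huv : u ≠ v) :
    ∀ (N : ℕ) (θ : V → V → ℝ),
    (∀ a b, θ a b = - θ b a) →
    (∀ a b, ¬ G.Adj a b → θ a b = 0) →
    (∀ x, x ≠ u → x ≠ v → ∑ y, θ x y = 0) →
    NoPosCycle G θ →
    0 ≤ ∑ y, θ u y →
    (Finset.univ.filter (fun p : V × V => 0 < θ p.1 p.2)).card ≤ N →
    ∃ (n : ℕ) (P : Fin n → G.Walk u v) (α : Fin n → ℝ),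
      (∀ k, (P k).IsPath) ∧ (∀ k, 0 < α k) ∧
      (∀ a b, θ a b = ∑ k, α k * pf (P k) a b) ∧
      (∀ k, ∀ d ∈ (P k).darts, 0 < θ d.toProd.1 d.toProd.2) := by
  intro N
  induction N with
  | zero =>
    intro θ hanti hsupp hdiv hacyc hs hcard
    refine ⟨0, Fin.elim0, Fin.elim0, fun k => k.elim0, fun k => k.elim0, ?_, fun k => k.elim0⟩
    intro a b
    rw [Finset.sum_of_isEmpty]
    have hempty : ∀ p : V × V, ¬ 0 < θ p.1 p.2 := by
      intro p hp
      have : (Finset.univ.filter (fun p : V × V => 0 < θ p.1 p.2)).Nonempty :=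
        ⟨p, Finset.mem_filter.2 ⟨Finset.mem_univ p, hp⟩⟩
      rw [← Finset.card_pos] at this
      omega
    have h1 : ¬ 0 < θ a b := hempty (a, b)
    have h2 : ¬ 0 < θ b a := hempty (b, a)
    have := hanti a b
    push_neg at h1 h2
    linarith
  | succ N ih =>
    intro θ hanti hsupp hdiv hacyc hs hcard
    by_cases hemp : ∀ a b, ¬ 0 < θ a b
    · refine ⟨0, Fin.elim0, Fin.elim0, fun k => k.elim0, fun k => k.elim0, ?_, fun k => k.elim0⟩
      intro a b
      rw [Finset.sum_of_isEmpty]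
      have h1 := hemp a b
      have h2 := hemp b a
      have := hanti a b
      push_neg at h1 h2
      linarith
    push_neg at hemp
    obtain ⟨x0, x1, hx01⟩ := hemp
    -- Step 1 : strength is positive
    have hdivv := div_at_v huv hanti hdiv
    have hspos : 0 < ∑ y, θ u y := by
      rcases lt_or_eq_of_le hs with h | h
      · exact h
      · exfalso
        -- zero strength: positive circulation, contradiction with acyclicity
        have hdivall : ∀ x, ∑ y, θ x y = 0 := by
          intro x
          by_cases hxu : x = u
          · rw [hxu, ← h]
          by_cases hxv : x = v
          · rw [hxv, hdivv, ← h]; ring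
          exact hdiv x hxu hxv
        have hadj01 : G.Adj x0 x1 := by
          by_contra hc
          rw [hsupp _ _ hc] at hx01
          exact lt_irrefl _ hx01
        have hext : ∀ a, a ≠ x0 → a ≠ x0 → (∃ z, 0 < θ z a) → ∃ w, 0 < θ a w := by
          intro a _ _ ⟨z, hz⟩
          have hza : θ a z < 0 := by rw [hanti]; linarith
          exact exists_pos_of_sum_zero_of_neg (hdivall a) hza
        obtain ⟨W', hW'p, hW'nil, _⟩ := chain_aux θ hanti hsupp hacyc hext
          (Fintype.card V) x1 (SimpleGraph.Walk.cons hadj01 SimpleGraph.Walk.nil)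
          (by rw [SimpleGraph.Walk.cons_isPath_iff]
              exact ⟨SimpleGraph.Walk.IsPath.nil, by simp [hadj01.ne]⟩)
          (by simp)
          (by intro d hd
              simp only [SimpleGraph.Walk.darts_cons, SimpleGraph.Walk.darts_nil,
                List.mem_singleton] at hd
              subst hd
              exact hx01)
          (by simp)
        rw [SimpleGraph.Walk.isPath_iff_eq_nil] at hW'p
        rw [hW'p] at hW'nil
        simp at hW'nil
    -- Step 2 : no positive inflow into u
    have hNoIn : ∀ z, ¬ 0 < θ z u := by
      intro z hz
      set θ' : V → V → ℝ := fun a b => θ b a with hθ'def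
      have hanti' : ∀ a b, θ' a b = - θ' b a := fun a b => hanti b a
      have hsupp' : ∀ a b, ¬ G.Adj a b → θ' a b = 0 := fun a b h =>
        hsupp b a (fun hc => h hc.symm)
      have hacyc' : NoPosCycle G θ' := by
        intro x C hC hpos
        apply hacyc x C.reverse (isCycle_reverse hC)
        intro d hd
        rw [SimpleGraph.Walk.mem_darts_reverse] at hd
        have := hpos d.symm hd
        exact this
      have hext' : ∀ a, a ≠ u → a ≠ u → (∃ z', 0 < θ' z' a) → ∃ w, 0 < θ' a w := by
        intro a hau _ hz'ex
        obtain ⟨z', hz'⟩ := hz'ex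
        have hz'' : 0 < θ a z' := hz'
        by_cases hav : a = v
        · have hvs : ∑ y, θ a y < 0 := by rw [hav, hdivv]; linarith
          obtain ⟨w, hw⟩ := exists_neg_of_sum_neg hvs
          refine ⟨w, ?_⟩
          show 0 < θ w a
          rw [hanti]; linarith
        · have hdiva := hdiv a hau hav
          obtain ⟨w, hw⟩ := exists_neg_of_sum_zero_of_pos hdiva hz''
          refine ⟨w, ?_⟩
          show 0 < θ w a
          rw [hanti]; linarith
      have hadjzu : G.Adj z u := by
        by_contra hc
        rw [hsupp _ _ hc] at hz
        exact lt_irrefl _ hz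
      obtain ⟨W', hW'p, hW'nil, _⟩ := chain_aux θ' hanti' hsupp' hacyc' hext'
        (Fintype.card V) z (SimpleGraph.Walk.cons hadjzu.symm SimpleGraph.Walk.nil)
        (by rw [SimpleGraph.Walk.cons_isPath_iff]
            exact ⟨SimpleGraph.Walk.IsPath.nil, by simp [hadjzu.ne']⟩)
        (by simp)
        (by intro d hd
            simp only [SimpleGraph.Walk.darts_cons, SimpleGraph.Walk.darts_nil,
              List.mem_singleton] at hd
            subst hd
            exact hz)
        (by simp)
      rw [SimpleGraph.Walk.isPath_iff_eq_nil] at hW'p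
      rw [hW'p] at hW'nil
      simp at hW'nil
    have hunn : ∀ y, 0 ≤ θ u y := by
      intro y
      have := hNoIn y
      push_neg at this
      have h2 := hanti u y
      linarith
    -- Step 3 : find a positive path from u to v
    obtain ⟨y0, hy0⟩ := exists_pos_of_sum_pos hspos
    have hadjuy0 : G.Adj u y0 := by
      by_contra hc
      rw [hsupp _ _ hc] at hy0
      exact lt_irrefl _ hy0
    have hext : ∀ a, a ≠ u → a ≠ v → (∃ z, 0 < θ z a) → ∃ w, 0 < θ a w := by
      intro a hau hav ⟨z, hz⟩
      have : θ a z < 0 := by rw [hanti]; linarith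
      exact exists_pos_of_sum_zero_of_neg (hdiv a hau hav) this
    obtain ⟨P0, hP0p, hP0nil, hP0pos⟩ := chain_aux θ hanti hsupp hacyc hext
      (Fintype.card V) y0 (SimpleGraph.Walk.cons hadjuy0 SimpleGraph.Walk.nil)
      (by rw [SimpleGraph.Walk.cons_isPath_iff]
          exact ⟨SimpleGraph.Walk.IsPath.nil, by simp [hadjuy0.ne]⟩)
      (by simp)
      (by intro d hd
          simp only [SimpleGraph.Walk.darts_cons, SimpleGraph.Walk.darts_nil,
            List.mem_singleton] at hd
          subst hd
          exact hy0)
      (by simp)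
    have trail0 : P0.IsTrail := hP0p.isTrail
    -- minimal flow value along P0
    have hdne : P0.darts.toFinset.Nonempty := by
      obtain ⟨d1, hd1, _⟩ := exists_dart_fst_start P0 hP0nil
      exact ⟨d1, List.mem_toFinset.2 hd1⟩
    obtain ⟨d0, hd0mem, hd0min⟩ :=
      Finset.exists_min_image P0.darts.toFinset (fun d => θ d.toProd.1 d.toProd.2) hdne
    have hd0 : d0 ∈ P0.darts := List.mem_toFinset.1 hd0mem
    set α0 := θ d0.toProd.1 d0.toProd.2 with hα0def
    have hα0pos : 0 < α0 := hP0pos d0 hd0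
    have hmin : ∀ d ∈ P0.darts, α0 ≤ θ d.toProd.1 d.toProd.2 := by
      intro d hd
      exact hd0min d (List.mem_toFinset.2 hd)
    set θ' : V → V → ℝ := fun a b => θ a b - α0 * pf P0 a b with hθ'def
    have hanti' : ∀ a b, θ' a b = - θ' b a := by
      intro a b
      simp only [hθ'def]
      rw [hanti a b, pf_anti P0 a b]
      ring
    have hsupp' : ∀ a b, ¬ G.Adj a b → θ' a b = 0 := by
      intro a b h
      have hpf : pf P0 a b = 0 := by
        by_contra hc
        exact h (adj_of_pf_ne_zero hc)
      simp only [hθ'def]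
      rw [hsupp a b h, hpf]
      ring
    have hdiv' : ∀ x, x ≠ u → x ≠ v → ∑ y, θ' x y = 0 := by
      intro x hxu hxv
      simp only [hθ'def]
      rw [Finset.sum_sub_distrib, hdiv x hxu hxv, ← Finset.mul_sum, sum_pf P0 x,
        if_neg hxu, if_neg hxv]
      ring
    have possub : ∀ a b, 0 < θ' a b → 0 < θ a b := by
      intro a b h
      rcases pf_cases trail0 a b with hpf | ⟨⟨d, hd, hdp⟩, hpf⟩ | ⟨⟨d, hd, hdp⟩, hpf⟩
      · simp only [hθ'def, hpf] at h
        linarith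
      · have := hP0pos d hd
        rw [hdp] at this
        exact this
      · exfalso
        have h1 := hmin d hd
        rw [hdp] at h1
        have h2 := hanti a b
        simp only [hθ'def, hpf] at h
        simp only at h1
        linarith
    have hacyc' : NoPosCycle G θ' := by
      intro x C hC hpos
      exact hacyc x C hC (fun d hd => possub _ _ (hpos d hd))
    have hs' : 0 ≤ ∑ y, θ' u y := by
      obtain ⟨d1, hd1, hd1fst⟩ := exists_dart_fst_start P0 hP0nil
      have h1 : α0 ≤ θ u d1.toProd.2 := by
        have := hmin d1 hd1
        rwa [hd1fst] at this
      have h2 : θ u d1.toProd.2 ≤ ∑ y, θ u y :=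
        Finset.single_le_sum (fun i _ => hunn i) (Finset.mem_univ _)
      simp only [hθ'def]
      rw [Finset.sum_sub_distrib, ← Finset.mul_sum, sum_pf P0 u, if_pos rfl,
        if_neg huv]
      have : (1:ℝ) - 0 = 1 := by ring
      rw [this, mul_one]
      linarith
    have hcard' : (Finset.univ.filter (fun p : V × V => 0 < θ' p.1 p.2)).card ≤ N := by
      have hss : (Finset.univ.filter (fun p : V × V => 0 < θ' p.1 p.2)) ⊂
          (Finset.univ.filter (fun p : V × V => 0 < θ p.1 p.2)) := by
        constructor
        · intro p hp
          rw [Finset.mem_filter] at hp ⊢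
          exact ⟨hp.1, possub _ _ hp.2⟩
        · intro hsub
          have hmem : d0.toProd ∈ Finset.univ.filter (fun p : V × V => 0 < θ p.1 p.2) :=
            Finset.mem_filter.2 ⟨Finset.mem_univ _, hα0pos⟩
          have := hsub hmem
          rw [Finset.mem_filter] at this
          have h0 : θ' d0.toProd.1 d0.toProd.2 = 0 := by
            simp only [hθ'def]
            rw [pf_dart trail0 hd0]
            ring
          rw [h0] at this
          exact lt_irrefl _ this.2
      have := Finset.card_lt_card hss
      omega
    obtain ⟨n, P, α, hPp, hαp, hsum, halign⟩ :=
      ih θ' hanti' hsupp' hdiv' hacyc' hs' hcard'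
    refine ⟨n + 1, Fin.cons P0 P, Fin.cons α0 α, ?_, ?_, ?_, ?_⟩
    · intro k
      refine Fin.cases ?_ ?_ k
      · exact hP0p
      · intro j
        simpa using hPp j
    · intro k
      refine Fin.cases ?_ ?_ k
      · exact hα0pos
      · intro j
        simpa using hαp j
    · intro a b
      rw [Fin.sum_univ_succ]
      have := hsum a b
      simp only [hθ'def] at this
      simp only [Fin.cons_zero, Fin.cons_succ]
      linarith
    · intro k
      refine Fin.cases ?_ ?_ k
      · simpa using hP0pos
      · intro j
        simp only [Fin.cons_succ]
        exact fun d hd => possub _ _ (halign j d hd)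

/-- summing a diagonal-vanishing symmetric function over ordered pairs counts
each unordered pair twice. -/
lemma sym2_sum (g : Sym2 V → ℝ) (hdiag : ∀ a, g s(a, a) = 0) :
    ∑ a, ∑ b, g s(a, b) = 2 * ∑ e : Sym2 V, g e := by
  classical
  have h1 : ∑ a, ∑ b, g s(a, b) = ∑ p : V × V, g (Sym2.mk.uncurry p) := by
    rw [Fintype.sum_prod_type]
    rfl
  rw [h1, ← Finset.sum_fiberwise_of_maps_to (g := Sym2.mk.uncurry)
    (fun x _ => Finset.mem_univ (Sym2.mk.uncurry x)) (fun p => g (Sym2.mk.uncurry p))]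
  rw [Finset.mul_sum]
  apply Finset.sum_congr rfl
  intro e _
  induction e with
  | _ a b =>
    have hconst : ∀ p ∈ Finset.univ.filter (fun p : V × V => Sym2.mk.uncurry p = s(a, b)),
        g (Sym2.mk.uncurry p) = g s(a, b) := by
      intro p hp
      rw [Finset.mem_filter] at hp
      rw [hp.2]
    rw [Finset.sum_congr rfl hconst, Finset.sum_const, nsmul_eq_mul]
    by_cases hab : a = b
    · subst hab
      rw [hdiag a]
      ring
    · have hfib : Finset.univ.filter (fun p : V × V => Sym2.mk.uncurry p = s(a, b)) =
          {(a, b), (b, a)} := by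
        ext ⟨p1, p2⟩
        simp only [Finset.mem_filter, Finset.mem_univ, true_and, Finset.mem_insert,
          Finset.mem_singleton, Function.uncurry_apply_pair, Sym2.eq_iff, Prod.mk.injEq]
        try tauto
      rw [hfib]
      rw [Finset.card_insert_of_notMem (by simp only [Finset.mem_singleton, Prod.mk.injEq, not_and]; intro h _; exact hab h),
        Finset.card_singleton]
      norm_num
lemma flowEnergy_eq_sym2_sum {r : Sym2 V → ℝ} {θ : V → V → ℝ}
    (hanti : ∀ a b, θ a b = - θ b a) (g : Sym2 V → ℝ)
    (hg : ∀ a b, g s(a, b) = θ a b ^ 2 * r s(a, b)) :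
    flowEnergy r θ = ∑ e : Sym2 V, g e := by
  have hdiag : ∀ a, g s(a, a) = 0 := by
    intro a
    have : θ a a = 0 := by have := hanti a a; linarith
    rw [hg, this]
    ring
  have h := sym2_sum g hdiag
  unfold flowEnergy
  have hgg : ∀ a b : V, θ a b ^ 2 * r s(a, b) = g s(a, b) := fun a b => (hg a b).symm
  calc (1/2 : ℝ) * ∑ x, ∑ y, θ x y ^ 2 * r s(x, y)
      = (1/2 : ℝ) * ∑ x, ∑ y, g s(x, y) := by
        congr 1
        exact Finset.sum_congr rfl fun x _ => Finset.sum_congr rfl fun y _ => hgg x y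
    _ = ∑ e : Sym2 V, g e := by rw [h]; ring

lemma list_toFinset_sum (l : List (Sym2 V)) (f : Sym2 V → ℝ) :
    ∑ e ∈ l.toFinset, f e = ∑ e : Sym2 V, (if e ∈ l then f e else 0) := by
  have h : l.toFinset = Finset.univ.filter (fun e => e ∈ l) := by
    ext e; simp
  rw [h, Finset.sum_filter]

/-- Part A: every path-family value dominates the energy of some unit flow. -/
lemma exists_flow_le_pathValue {u v : V} (huv : u ≠ v) {r : Sym2 V → ℝ}
    (hr : ∀ e ∈ G.edgeSet, 0 < r e) {n : ℕ}
    (P : Fin n → G.Walk u v) (α : Fin n → ℝ) (ρ : Fin n → Sym2 V → ℝ)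
    (hPp : ∀ k, (P k).IsPath) (hα : ∀ k, 0 < α k) (hαsum : ∑ k, α k = 1)
    (hρ : ∀ k e, 0 < ρ k e)
    (hcon : ∀ e ∈ G.edgeSet,
      (∑ k, if e ∈ (P k).edges then (ρ k e)⁻¹ else 0) ≤ (r e)⁻¹) :
    ∃ θ, IsUnitFlow G u v θ ∧
      flowEnergy r θ ≤ ∑ k, (α k) ^ 2 * ∑ e ∈ (P k).edges.toFinset, ρ k e := by
  classical
  set θ : V → V → ℝ := fun a b => ∑ k, α k * pf (P k) a b with hθdef
  have hanti : ∀ a b, θ a b = - θ b a := by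
    intro a b
    simp only [hθdef, ← Finset.sum_neg_distrib]
    exact Finset.sum_congr rfl fun k _ => by rw [pf_anti (P k) a b]; ring
  have hsupp : ∀ a b, ¬ G.Adj a b → θ a b = 0 := by
    intro a b h
    simp only [hθdef]
    apply Finset.sum_eq_zero
    intro k _
    have : pf (P k) a b = 0 := by
      by_contra hc
      exact h (adj_of_pf_ne_zero hc)
    rw [this, mul_zero]
  have hflow : IsUnitFlow G u v θ := by
    refine ⟨hanti, hsupp, ?_, ?_⟩
    · intro x hxu hxv
      simp only [hθdef]
      rw [Finset.sum_comm]
      apply Finset.sum_eq_zero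
      intro k _
      rw [← Finset.mul_sum, sum_pf (P k) x, if_neg hxu, if_neg hxv]
      ring
    · simp only [hθdef]
      rw [Finset.sum_comm]
      have : ∀ k ∈ Finset.univ, ∑ y, α k * pf (P k) u y = α k := by
        intro k _
        rw [← Finset.mul_sum, sum_pf (P k) u, if_pos rfl, if_neg huv]
        ring
      rw [Finset.sum_congr rfl this, hαsum]
  refine ⟨θ, hflow, ?_⟩
  -- pointwise bound
  have hpoint : ∀ a b, θ a b ^ 2 * r s(a, b) ≤
      ∑ k, (if s(a, b) ∈ (P k).edges then α k ^ 2 * ρ k s(a, b) else 0) := by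
    intro a b
    have hRHS_nonneg : ∀ k : Fin n, (0:ℝ) ≤
        (if s(a, b) ∈ (P k).edges then α k ^ 2 * ρ k s(a, b) else 0) := by
      intro k
      split_ifs
      · exact mul_nonneg (sq_nonneg _) (hρ k _).le
      · exact le_refl 0
    by_cases hadj : G.Adj a b
    · set e : Sym2 V := s(a, b) with hedef
      have he : e ∈ G.edgeSet := hadj
      set A : ℝ := ∑ k, (if e ∈ (P k).edges then α k else 0) with hAdef
      have h1 : |θ a b| ≤ A := by
        simp only [hθdef]
        refine le_trans (Finset.abs_sum_le_sum_abs _ _) ?_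
        apply Finset.sum_le_sum
        intro k _
        rcases pf_cases (hPp k).isTrail a b with hpf | ⟨⟨d, hd, hdp⟩, hpf⟩ | ⟨⟨d, hd, hdp⟩, hpf⟩
        · rw [hpf, mul_zero, abs_zero]
          split_ifs
          · exact (hα k).le
          · exact le_refl 0
        · have hmem : e ∈ (P k).edges :=
            (edge_mem_iff_exists_dart (P k) a b).2 (Or.inl ⟨d, hd, hdp⟩)
          rw [hpf, mul_one, if_pos hmem, abs_of_pos (hα k)]
        · have hmem : e ∈ (P k).edges :=
            (edge_mem_iff_exists_dart (P k) a b).2 (Or.inr ⟨d, hd, hdp⟩)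
          rw [hpf, if_pos hmem]
          rw [show α k * (-1) = -(α k) by ring, abs_neg, abs_of_pos (hα k)]
      set S : ℝ := ∑ k, (if e ∈ (P k).edges then α k ^ 2 * ρ k e else 0) with hSdef
      have hS_nonneg : 0 ≤ S := Finset.sum_nonneg fun k _ => by
        split_ifs
        · exact mul_nonneg (sq_nonneg _) (hρ k _).le
        · exact le_refl 0
      have hCS : A ^ 2 ≤ S * ∑ k, (if e ∈ (P k).edges then (ρ k e)⁻¹ else 0) := by
        have := Finset.sum_mul_sq_le_sq_mul_sq Finset.univ
          (fun k => if e ∈ (P k).edges then α k * Real.sqrt (ρ k e) else 0)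
          (fun k => if e ∈ (P k).edges then (Real.sqrt (ρ k e))⁻¹ else 0)
        have hfg : ∀ k : Fin n,
            (if e ∈ (P k).edges then α k * Real.sqrt (ρ k e) else 0) *
            (if e ∈ (P k).edges then (Real.sqrt (ρ k e))⁻¹ else 0) =
            (if e ∈ (P k).edges then α k else 0) := by
          intro k
          split_ifs with h
          · rw [mul_assoc, mul_inv_cancel₀ (ne_of_gt (Real.sqrt_pos.2 (hρ k e))), mul_one]
          · ring
        have hf2 : ∀ k : Fin n,
            (if e ∈ (P k).edges then α k * Real.sqrt (ρ k e) else 0) ^ 2 =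
            (if e ∈ (P k).edges then α k ^ 2 * ρ k e else 0) := by
          intro k
          split_ifs with h
          · rw [mul_pow, Real.sq_sqrt (hρ k e).le]
          · ring
        have hg2 : ∀ k : Fin n,
            (if e ∈ (P k).edges then (Real.sqrt (ρ k e))⁻¹ else 0) ^ 2 =
            (if e ∈ (P k).edges then (ρ k e)⁻¹ else 0) := by
          intro k
          split_ifs with h
          · rw [inv_pow, Real.sq_sqrt (hρ k e).le]
          · ring
        rw [Finset.sum_congr rfl (fun k _ => hfg k), Finset.sum_congr rfl (fun k _ => hf2 k),
          Finset.sum_congr rfl (fun k _ => hg2 k)] at this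
        exact this
      have hrpos : 0 < r e := hr e he
      calc θ a b ^ 2 * r s(a, b) = |θ a b| ^ 2 * r e := by rw [sq_abs]
        _ ≤ A ^ 2 * r e := by
            apply mul_le_mul_of_nonneg_right _ hrpos.le
            exact pow_le_pow_left₀ (abs_nonneg _) h1 2
        _ ≤ (S * (r e)⁻¹) * r e := by
            apply mul_le_mul_of_nonneg_right _ hrpos.le
            exact le_trans hCS (mul_le_mul_of_nonneg_left (hcon e he) hS_nonneg)
        _ = S := by field_simp
        _ = ∑ k, (if s(a, b) ∈ (P k).edges then α k ^ 2 * ρ k s(a, b) else 0) := rfl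
    · have hzero : θ a b = 0 := hsupp a b hadj
      rw [hzero]
      simp only [ne_eq, OfNat.ofNat_ne_zero, not_false_eq_true, zero_pow, zero_mul]
      exact Finset.sum_nonneg fun k _ => hRHS_nonneg k
  -- conclude
  have hEform : flowEnergy r θ ≤
      (1/2 : ℝ) * ∑ a, ∑ b, ∑ k, (if s(a, b) ∈ (P k).edges then α k ^ 2 * ρ k s(a, b) else 0) := by
    unfold flowEnergy
    have : ∀ a : V, ∑ b, θ a b ^ 2 * r s(a, b) ≤
        ∑ b, ∑ k, (if s(a, b) ∈ (P k).edges then α k ^ 2 * ρ k s(a, b) else 0) :=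
      fun a => Finset.sum_le_sum fun b _ => hpoint a b
    have h2 : ∑ a, ∑ b, θ a b ^ 2 * r s(a, b) ≤
        ∑ a, ∑ b, ∑ k, (if s(a, b) ∈ (P k).edges then α k ^ 2 * ρ k s(a, b) else 0) :=
      Finset.sum_le_sum fun a _ => this a
    linarith
  refine le_trans hEform ?_
  -- exchange sums and identify with the path value
  have hswap : ∑ a, ∑ b, ∑ k, (if s(a, b) ∈ (P k).edges then α k ^ 2 * ρ k s(a, b) else 0)
      = ∑ k : Fin n, ∑ a, ∑ b, (if s(a, b) ∈ (P k).edges then α k ^ 2 * ρ k s(a, b) else 0) := by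
    calc ∑ a, ∑ b, ∑ k, (if s(a, b) ∈ (P k).edges then α k ^ 2 * ρ k s(a, b) else 0)
        = ∑ a, ∑ k, ∑ b, (if s(a, b) ∈ (P k).edges then α k ^ 2 * ρ k s(a, b) else 0) :=
          Finset.sum_congr rfl fun a _ => Finset.sum_comm
      _ = ∑ k : Fin n, ∑ a, ∑ b, (if s(a, b) ∈ (P k).edges then α k ^ 2 * ρ k s(a, b) else 0) :=
          Finset.sum_comm
  rw [hswap]
  have hterm : ∀ k : Fin n,
      (1/2 : ℝ) * ∑ a, ∑ b, (if s(a, b) ∈ (P k).edges then α k ^ 2 * ρ k s(a, b) else 0)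
      = α k ^ 2 * ∑ e ∈ (P k).edges.toFinset, ρ k e := by
    intro k
    have hdiag : ∀ a : V, (if s(a, a) ∈ (P k).edges then α k ^ 2 * ρ k s(a, a) else 0) = 0 := by
      intro a
      rw [if_neg]
      intro hc
      exact G.irrefl ((P k).adj_of_mem_edges hc)
    have hs2 := sym2_sum (fun e => if e ∈ (P k).edges then α k ^ 2 * ρ k e else 0) hdiag
    have h3 : ∑ e : Sym2 V, (if e ∈ (P k).edges then α k ^ 2 * ρ k e else 0)
        = α k ^ 2 * ∑ e ∈ (P k).edges.toFinset, ρ k e := by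
      rw [list_toFinset_sum ((P k).edges) (fun e => ρ k e), Finset.mul_sum]
      apply Finset.sum_congr rfl
      intro e _
      split_ifs
      · rfl
      · ring
    rw [hs2, h3]
    ring
  rw [Finset.mul_sum]
  exact le_of_eq (Finset.sum_congr rfl fun k _ => hterm k)

lemma energy_term_nonneg {r : Sym2 V → ℝ} (hr : ∀ e ∈ G.edgeSet, 0 < r e)
    {θ : V → V → ℝ} (hsupp : ∀ x y, ¬ G.Adj x y → θ x y = 0) (a b : V) :
    0 ≤ θ a b ^ 2 * r s(a, b) := by
  by_cases h : G.Adj a b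
  · exact mul_nonneg (sq_nonneg _) (hr _ h).le
  · rw [hsupp a b h]
    norm_num

lemma flowEnergy_nonneg {r : Sym2 V → ℝ} (hr : ∀ e ∈ G.edgeSet, 0 < r e)
    {θ : V → V → ℝ} (hsupp : ∀ x y, ¬ G.Adj x y → θ x y = 0) :
    0 ≤ flowEnergy r θ := by
  unfold flowEnergy
  have : (0:ℝ) ≤ ∑ x, ∑ y, θ x y ^ 2 * r s(x, y) :=
    Finset.sum_nonneg fun x _ => Finset.sum_nonneg fun y _ =>
      energy_term_nonneg hr hsupp x y
  linarith

lemma energy_term_le {r : Sym2 V → ℝ} (hr : ∀ e ∈ G.edgeSet, 0 < r e)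
    {θ : V → V → ℝ} (hsupp : ∀ x y, ¬ G.Adj x y → θ x y = 0) (a b : V) :
    θ a b ^ 2 * r s(a, b) ≤ 2 * flowEnergy r θ := by
  have h1 : θ a b ^ 2 * r s(a, b) ≤ ∑ y, θ a y ^ 2 * r s(a, y) :=
    Finset.single_le_sum (fun y _ => energy_term_nonneg hr hsupp a y) (Finset.mem_univ b)
  have h2 : ∑ y, θ a y ^ 2 * r s(a, y) ≤ ∑ x, ∑ y, θ x y ^ 2 * r s(x, y) :=
    Finset.single_le_sum
      (fun x _ => Finset.sum_nonneg fun y _ => energy_term_nonneg hr hsupp x y)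
      (Finset.mem_univ a)
  unfold flowEnergy
  linarith

lemma exists_min_unit_flow {u v : V} (r : Sym2 V → ℝ) (hr : ∀ e ∈ G.edgeSet, 0 < r e)
    (θ0 : V → V → ℝ) (h0 : IsUnitFlow G u v θ0) :
    ∃ θs, IsUnitFlow G u v θs ∧
      ∀ θ, IsUnitFlow G u v θ → flowEnergy r θs ≤ flowEnergy r θ := by
  classical
  -- there exists an edge
  have hadj : ∃ a b : V, G.Adj a b := by
    by_contra hc
    push_neg at hc
    have : ∀ y, θ0 u y = 0 := fun y => h0.2.1 u y (hc u y)
    have hsum : ∑ y, θ0 u y = 0 := Finset.sum_eq_zero fun y _ => this y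
    rw [h0.2.2.2] at hsum
    norm_num at hsum
  set Sadj := Finset.univ.filter (fun p : V × V => G.Adj p.1 p.2) with hSadj
  have hSne : Sadj.Nonempty := by
    obtain ⟨a, b, hab⟩ := hadj
    exact ⟨(a, b), Finset.mem_filter.2 ⟨Finset.mem_univ _, hab⟩⟩
  obtain ⟨pm, hpmem, hpmin⟩ := Finset.exists_min_image Sadj (fun p => r s(p.1, p.2)) hSne
  have hpmadj : G.Adj pm.1 pm.2 := (Finset.mem_filter.1 hpmem).2
  set rmin := r s(pm.1, pm.2) with hrmindef
  have hrminpos : 0 < rmin := hr _ hpmadj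
  set E0 := flowEnergy r θ0 with hE0def
  have hE0 : 0 ≤ E0 := flowEnergy_nonneg hr h0.2.1
  set M := Real.sqrt (2 * E0 / rmin) with hMdef
  have hM0 : 0 ≤ M := Real.sqrt_nonneg _
  set K := {θ : V → V → ℝ | IsUnitFlow G u v θ ∧ flowEnergy r θ ≤ E0} with hKdef
  have hc : ∀ x y : V, Continuous fun θ : V → V → ℝ => θ x y := fun x y =>
    (continuous_apply y).comp (continuous_apply x)
  have hEcont : Continuous (flowEnergy r) := by
    unfold flowEnergy
    exact continuous_const.mul (continuous_finset_sum _ fun x _ =>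
      continuous_finset_sum _ fun y _ => ((hc x y).pow 2).mul continuous_const)
  have hclosedFlow : IsClosed {θ : V → V → ℝ | IsUnitFlow G u v θ} := by
    have heq : {θ : V → V → ℝ | IsUnitFlow G u v θ} =
        (⋂ (x : V), ⋂ (y : V), {θ : V → V → ℝ | θ x y = -θ y x}) ∩
        ((⋂ (x : V), ⋂ (y : V), {θ : V → V → ℝ | G.Adj x y ∨ θ x y = 0}) ∩
        ((⋂ (x : V), {θ : V → V → ℝ | x = u ∨ x = v ∨ ∑ y, θ x y = 0}) ∩
        {θ : V → V → ℝ | ∑ y, θ u y = 1})) := by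
      ext θ
      simp only [Set.mem_setOf_eq, Set.mem_inter_iff, Set.mem_iInter, IsUnitFlow]
      constructor
      · rintro ⟨h1, h2, h3, h4⟩
        refine ⟨h1, fun x y => ?_, fun x => ?_, h4⟩
        · by_cases h : G.Adj x y
          · exact Or.inl h
          · exact Or.inr (h2 x y h)
        · by_cases hx : x = u
          · exact Or.inl hx
          by_cases hy : x = v
          · exact Or.inr (Or.inl hy)
          · exact Or.inr (Or.inr (h3 x hx hy))
      · rintro ⟨h1, h2, h3, h4⟩
        refine ⟨h1, fun x y hxy => ?_, fun x hx hy => ?_, h4⟩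
        · rcases h2 x y with h | h
          · exact absurd h hxy
          · exact h
        · rcases h3 x with h | h | h
          · exact absurd h hx
          · exact absurd h hy
          · exact h
    rw [heq]
    refine IsClosed.inter ?_ (IsClosed.inter ?_ (IsClosed.inter ?_ ?_))
    · apply isClosed_iInter; intro x; apply isClosed_iInter; intro y
      exact isClosed_eq (hc x y) (hc y x).neg
    · apply isClosed_iInter; intro x; apply isClosed_iInter; intro y
      by_cases h : G.Adj x y
      · have : {θ : V → V → ℝ | G.Adj x y ∨ θ x y = 0} = Set.univ := by
          ext θ; simp [h]
        rw [this]; exact isClosed_univ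
      · have : {θ : V → V → ℝ | G.Adj x y ∨ θ x y = 0} = {θ : V → V → ℝ | θ x y = 0} := by
          ext θ; simp [h]
        rw [this]; exact isClosed_eq (hc x y) continuous_const
    · apply isClosed_iInter; intro x
      by_cases hx : x = u
      · have : {θ : V → V → ℝ | x = u ∨ x = v ∨ ∑ y, θ x y = 0} = Set.univ := by
          ext θ; simp [hx]
        rw [this]; exact isClosed_univ
      by_cases hy : x = v
      · have : {θ : V → V → ℝ | x = u ∨ x = v ∨ ∑ y, θ x y = 0} = Set.univ := by
          ext θ; simp [hy]
        rw [this]; exact isClosed_univ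
      · have : {θ : V → V → ℝ | x = u ∨ x = v ∨ ∑ y, θ x y = 0} =
            {θ : V → V → ℝ | ∑ y, θ x y = 0} := by
          ext θ; simp [hx, hy]
        rw [this]
        exact isClosed_eq (continuous_finset_sum _ fun y _ => hc x y) continuous_const
    · exact isClosed_eq (continuous_finset_sum _ fun y _ => hc u y) continuous_const
  have hKclosed : IsClosed K :=
    hclosedFlow.inter (isClosed_le hEcont continuous_const)
  have hbd : ∀ θ ∈ K, ∀ a b : V, |θ a b| ≤ M := by
    rintro θ ⟨hθ, hE⟩ a b
    by_cases h : G.Adj a b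
    · have h1 : θ a b ^ 2 * rmin ≤ θ a b ^ 2 * r s(a, b) := by
        apply mul_le_mul_of_nonneg_left _ (sq_nonneg _)
        exact hpmin (a, b) (Finset.mem_filter.2 ⟨Finset.mem_univ _, h⟩)
      have h2 := energy_term_le hr hθ.2.1 a b
      have h3 : θ a b ^ 2 ≤ 2 * E0 / rmin := by
        rw [le_div_iff₀ hrminpos]
        calc θ a b ^ 2 * rmin ≤ θ a b ^ 2 * r s(a, b) := h1
          _ ≤ 2 * flowEnergy r θ := h2
          _ ≤ 2 * E0 := by linarith
      calc |θ a b| = Real.sqrt ((θ a b) ^ 2) := (Real.sqrt_sq_eq_abs _).symm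
        _ ≤ M := Real.sqrt_le_sqrt h3
    · rw [hθ.2.1 a b h]
      simpa using hM0
  have hKsub : K ⊆ Metric.closedBall 0 M := by
    intro θ hθ
    rw [Metric.mem_closedBall, dist_pi_le_iff hM0]
    intro x
    rw [dist_pi_le_iff hM0]
    intro y
    rw [Real.dist_eq]
    simpa using hbd θ hθ x y
  have hKcompact : IsCompact K :=
    Metric.isCompact_iff_isClosed_bounded.mpr
      ⟨hKclosed, Metric.isBounded_closedBall.subset hKsub⟩
  have hKne : K.Nonempty := ⟨θ0, h0, le_refl _⟩
  obtain ⟨θs, hθsK, hmin⟩ := hKcompact.exists_isMinOn hKne hEcont.continuousOn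
  refine ⟨θs, hθsK.1, ?_⟩
  intro θ hθ
  by_cases hE : flowEnergy r θ ≤ E0
  · exact isMinOn_iff.mp hmin θ ⟨hθ, hE⟩
  · have h1 : flowEnergy r θs ≤ E0 := isMinOn_iff.mp hmin θ0 ⟨h0, le_refl _⟩
    linarith

lemma minimizer_noPosCycle {u v : V} {r : Sym2 V → ℝ} (hr : ∀ e ∈ G.edgeSet, 0 < r e)
    {θ : V → V → ℝ} (hθ : IsUnitFlow G u v θ)
    (hmin : ∀ θ', IsUnitFlow G u v θ' → flowEnergy r θ ≤ flowEnergy r θ') :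
    NoPosCycle G θ := by
  intro x C hC hpos
  have trail : C.IsTrail := hC.isCircuit.isTrail
  -- a dart of the cycle
  have hCd : ∃ d : G.Dart, d ∈ C.darts := by
    have h1 : ¬ C.Nil := hC.not_nil
    rw [SimpleGraph.Walk.not_nil_iff_lt_length] at h1
    have h2 : C.darts ≠ [] := by
      intro hc
      have := C.length_darts
      rw [hc] at this
      simp at this
      omega
    exact List.exists_mem_of_ne_nil _ h2
  obtain ⟨dd, hdd⟩ := hCd
  -- term positivity
  have htermB : ∀ a b : V, 0 ≤ θ a b * pf C a b * r s(a, b) := by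
    intro a b
    rcases pf_cases trail a b with hpf | ⟨⟨d, hd, hdp⟩, hpf⟩ | ⟨⟨d, hd, hdp⟩, hpf⟩
    · rw [hpf]; ring_nf; exact le_refl 0
    · have hθpos : 0 < θ a b := by have := hpos d hd; rwa [hdp] at this
      have hadj : G.Adj a b := by
        have := d.adj; rwa [hdp] at this
      rw [hpf]
      have := hr _ (G.mem_edgeSet.2 hadj)
      positivity
    · have hθpos : 0 < θ b a := by have := hpos d hd; rwa [hdp] at this
      have hadj : G.Adj b a := by have := d.adj; rwa [hdp] at this
      have hneg : θ a b < 0 := by rw [hθ.1]; linarith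
      have hrpos : 0 < r s(a, b) := by
        rw [Sym2.eq_swap]
        exact hr _ (G.mem_edgeSet.2 hadj)
      rw [hpf]
      nlinarith
  have htermA : ∀ a b : V, 0 ≤ (pf C a b) ^ 2 * r s(a, b) := by
    intro a b
    by_cases h : pf C a b = 0
    · rw [h]; norm_num
    · have hadj := adj_of_pf_ne_zero h
      exact mul_nonneg (sq_nonneg _) (hr _ (G.mem_edgeSet.2 hadj)).le
  have hddadj : G.Adj dd.toProd.1 dd.toProd.2 := dd.adj
  have hrdd : 0 < r s(dd.toProd.1, dd.toProd.2) := hr _ (G.mem_edgeSet.2 hddadj)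
  have hddpf : pf C dd.toProd.1 dd.toProd.2 = 1 := pf_dart trail hdd
  set T2 := ∑ a, ∑ b, θ a b * pf C a b * r s(a, b) with hT2def
  set T3 := ∑ a, ∑ b, (pf C a b) ^ 2 * r s(a, b) with hT3def
  have hT2pos : 0 < T2 := by
    apply Finset.sum_pos' (fun a _ => Finset.sum_nonneg fun b _ => htermB a b)
    refine ⟨dd.toProd.1, Finset.mem_univ _, ?_⟩
    apply Finset.sum_pos' (fun b _ => htermB _ b)
    refine ⟨dd.toProd.2, Finset.mem_univ _, ?_⟩
    rw [hddpf]
    have := hpos dd hdd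
    nlinarith
  have hT3pos : 0 < T3 := by
    apply Finset.sum_pos' (fun a _ => Finset.sum_nonneg fun b _ => htermA a b)
    refine ⟨dd.toProd.1, Finset.mem_univ _, ?_⟩
    apply Finset.sum_pos' (fun b _ => htermA _ b)
    refine ⟨dd.toProd.2, Finset.mem_univ _, ?_⟩
    rw [hddpf]
    nlinarith
  set ε := T2 / T3 with hεdef
  have hεpos : 0 < ε := div_pos hT2pos hT3pos
  set θ' : V → V → ℝ := fun a b => θ a b - ε * pf C a b with hθ'def
  have hflow' : IsUnitFlow G u v θ' := by
    obtain ⟨h1, h2, h3, h4⟩ := hθ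
    refine ⟨?_, ?_, ?_, ?_⟩
    · intro a b
      simp only [hθ'def]
      rw [h1 a b, pf_anti C a b]
      ring
    · intro a b h
      simp only [hθ'def]
      have hpf0 : pf C a b = 0 := by
        by_contra hc
        exact h (adj_of_pf_ne_zero hc)
      rw [h2 a b h, hpf0]
      ring
    · intro z hzu hzv
      simp only [hθ'def]
      rw [Finset.sum_sub_distrib, h3 z hzu hzv, ← Finset.mul_sum, sum_pf C z]
      ring
    · simp only [hθ'def]
      rw [Finset.sum_sub_distrib, h4, ← Finset.mul_sum, sum_pf C u]
      ring
  -- the energy strictly decreases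
  have hexp : flowEnergy r θ' = flowEnergy r θ - ε * T2 + ε ^ 2 * T3 / 2 := by
    unfold flowEnergy
    have hpt : ∀ a b : V, (θ' a b) ^ 2 * r s(a, b) =
        θ a b ^ 2 * r s(a, b) - 2 * ε * (θ a b * pf C a b * r s(a, b))
          + ε ^ 2 * ((pf C a b) ^ 2 * r s(a, b)) := by
      intro a b
      simp only [hθ'def]
      ring
    have h1 : ∑ a, ∑ b, (θ' a b) ^ 2 * r s(a, b)
        = ∑ a, ∑ b, (θ a b ^ 2 * r s(a, b) - 2 * ε * (θ a b * pf C a b * r s(a, b))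
          + ε ^ 2 * ((pf C a b) ^ 2 * r s(a, b))) :=
      Finset.sum_congr rfl fun a _ => Finset.sum_congr rfl fun b _ => hpt a b
    rw [h1]
    simp only [Finset.sum_add_distrib, Finset.sum_sub_distrib, ← Finset.mul_sum]
    rw [← hT2def, ← hT3def]
    ring
  have hlt : flowEnergy r θ' < flowEnergy r θ := by
    rw [hexp, hεdef]
    have h2 : T2 / T3 * T2 - (T2 / T3) ^ 2 * T3 / 2 = T2 ^ 2 / (2 * T3) := by
      field_simp
      ring
    have h3 : 0 < T2 ^ 2 / (2 * T3) := by positivity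
    linarith
  exact absurd (hmin θ' hflow') (by linarith)

end EffResAux

/-- **Path-decomposition characterization of the effective resistance**
(generalized parallel/series law): for a finite connected network with positive
edge resistances, the effective resistance between `u` and `v` equals the
infimum of `∑ₖ αₖ² ∑_{e ∈ Pₖ} r_{e,Pₖ}` over all weighted families of
self-avoiding paths as above; moreover the infimum is achieved. -/
theorem effRes_eq_inf_pathValues {V : Type*} [Fintype V] [DecidableEq V]
    (G : SimpleGraph V) (hG : G.Connected)
    (r : Sym2 V → ℝ) (hr : ∀ e ∈ G.edgeSet, 0 < r e)
    (u v : V) (huv : u ≠ v) :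
    effRes G r u v = sInf (pathValues G r u v) ∧
      sInf (pathValues G r u v) ∈ pathValues G r u v := by

  classical
  -- initial unit flow from a path
  obtain ⟨W0⟩ := hG.preconnected u v
  set Q0 : G.Walk u v := (W0.toPath : G.Walk u v) with hQ0def
  have hQ0path : Q0.IsPath := W0.toPath.2
  set θ0 : V → V → ℝ := fun a b => pf Q0 a b with hθ0def
  have h0 : IsUnitFlow G u v θ0 := by
    refine ⟨fun a b => pf_anti Q0 a b, ?_, ?_, ?_⟩
    · intro a b h
      by_contra hc
      exact h (adj_of_pf_ne_zero hc)
    · intro x hxu hxv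
      simp only [hθ0def]
      rw [sum_pf Q0 x, if_neg hxu, if_neg hxv]
      ring
    · simp only [hθ0def]
      rw [sum_pf Q0 u, if_pos rfl, if_neg huv]
      ring
  -- minimizer
  obtain ⟨θs, hθs, hmin⟩ := exists_min_unit_flow r hr θ0 h0
  obtain ⟨hanti, hsupp, hdiv, hstr⟩ := hθs
  have hNPC : NoPosCycle G θs := minimizer_noPosCycle hr ⟨hanti, hsupp, hdiv, hstr⟩ hmin
  set Es := flowEnergy r θs with hEsdef
  -- decomposition of the minimizer into paths
  obtain ⟨n, P, α, hPp, hα, hsum, halign⟩ := decomp u v huv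
    (Finset.univ.filter (fun p : V × V => 0 < θs p.1 p.2)).card θs hanti hsupp hdiv hNPC
    (by rw [hstr]; norm_num) (le_refl _)
  -- sum of weights is 1
  have hαsum : ∑ k, α k = 1 := by
    have h1 : ∑ y, θs u y = ∑ k, α k := by
      calc ∑ y, θs u y = ∑ y, ∑ k, α k * pf (P k) u y :=
            Finset.sum_congr rfl fun y _ => hsum u y
        _ = ∑ k, ∑ y, α k * pf (P k) u y := Finset.sum_comm
        _ = ∑ k, α k := by
            apply Finset.sum_congr rfl
            intro k _
            rw [← Finset.mul_sum, sum_pf (P k) u, if_pos rfl, if_neg huv]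
            ring
    rw [← h1, hstr]
  -- key identity on positively oriented edges
  have hkey : ∀ a b : V, 0 < θs a b →
      θs a b = ∑ k, (if s(a, b) ∈ (P k).edges then α k else 0) := by
    intro a b hab
    rw [hsum a b]
    apply Finset.sum_congr rfl
    intro k _
    rcases pf_cases (hPp k).isTrail a b with hpf | ⟨⟨d, hd, hdp⟩, hpf⟩ | ⟨⟨d, hd, hdp⟩, hpf⟩
    · rw [hpf, mul_zero, if_neg]
      intro hmem
      rcases (edge_mem_iff_exists_dart (P k) a b).1 hmem with ⟨d, hd, hdp⟩ | ⟨d, hd, hdp⟩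
      · have := pf_dart (hPp k).isTrail hd
        rw [hdp] at this
        simp only at this
        rw [hpf] at this
        norm_num at this
      · have := pf_dart (hPp k).isTrail hd
        rw [hdp] at this
        simp only at this
        rw [pf_anti, hpf] at this
        norm_num at this
    · rw [hpf, mul_one, if_pos
        ((edge_mem_iff_exists_dart (P k) a b).2 (Or.inl ⟨d, hd, hdp⟩))]
    · exfalso
      have := halign k d hd
      rw [hdp] at this
      simp only at this
      have h2 := hanti a b
      linarith
  -- trivial vanishing: pairs not covered by any path
  have hzero : ∀ a b : V, (∀ k, s(a, b) ∉ (P k).edges) → θs a b = 0 := by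
    intro a b hno
    rw [hsum a b]
    apply Finset.sum_eq_zero
    intro k _
    rcases pf_cases (hPp k).isTrail a b with hpf | ⟨⟨d, hd, hdp⟩, hpf⟩ | ⟨⟨d, hd, hdp⟩, hpf⟩
    · rw [hpf, mul_zero]
    · exact absurd ((edge_mem_iff_exists_dart (P k) a b).2 (Or.inl ⟨d, hd, hdp⟩)) (hno k)
    · exact absurd ((edge_mem_iff_exists_dart (P k) a b).2 (Or.inr ⟨d, hd, hdp⟩)) (hno k)
  -- |θs| as a function on Sym2
  set θabs : Sym2 V → ℝ :=
    Sym2.lift ⟨fun a b => |θs a b|, by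
      intro a b
      show |θs a b| = |θs b a|
      rw [hanti a b, abs_neg]⟩ with hθabsdef
  have hθabs_mk : ∀ a b : V, θabs s(a, b) = |θs a b| := fun a b => rfl
  set ρ : Fin n → Sym2 V → ℝ :=
    fun k e => if e ∈ (P k).edges then r e * θabs e / α k else 1 with hρdef
  have hedge_pos : ∀ (k : Fin n) (e : Sym2 V), e ∈ (P k).edges →
      0 < r e ∧ 0 < θabs e := by
    intro k e he
    have hre : e ∈ G.edgeSet := (P k).edges_subset_edgeSet he
    refine ⟨hr e hre, ?_⟩
    obtain ⟨d, hd, hde⟩ := List.mem_map.1 he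
    have hpos := halign k d hd
    have : e = s(d.toProd.1, d.toProd.2) := by
      rw [← hde]
      rfl
    rw [this, hθabs_mk]
    exact abs_pos.2 (ne_of_gt hpos)
  have hρpos : ∀ (k : Fin n) (e : Sym2 V), 0 < ρ k e := by
    intro k e
    simp only [hρdef]
    split_ifs with h
    · obtain ⟨h1, h2⟩ := hedge_pos k e h
      exact div_pos (mul_pos h1 h2) (hα k)
    · norm_num
  -- the constraint
  have hcon : ∀ e ∈ G.edgeSet,
      (∑ k, if e ∈ (P k).edges then (ρ k e)⁻¹ else 0) ≤ (r e)⁻¹ := by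
    intro e he
    by_cases hex : ∃ k, e ∈ (P k).edges
    · obtain ⟨k0, hk0⟩ := hex
      obtain ⟨d, hd, hde⟩ := List.mem_map.1 hk0
      have hepair : e = s(d.toProd.1, d.toProd.2) := by rw [← hde]; rfl
      set a := d.toProd.1
      set b := d.toProd.2
      have hab : 0 < θs a b := halign k0 d hd
      have hαt : θabs e = θs a b := by
        rw [hepair, hθabs_mk, abs_of_pos hab]
      have hrpos : 0 < r e := hr e he
      have h1 : ∀ k : Fin n, (if e ∈ (P k).edges then (ρ k e)⁻¹ else 0) =
          (if e ∈ (P k).edges then α k else 0) * (r e * θs a b)⁻¹ := by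
        intro k
        split_ifs with h
        · simp only [hρdef, if_pos h, hαt]
          rw [inv_div]
          ring
        · ring
      rw [Finset.sum_congr rfl (fun k _ => h1 k), ← Finset.sum_mul]
      have h2 : ∑ k, (if e ∈ (P k).edges then α k else 0) = θs a b := by
        rw [hepair, ← hkey a b hab]
      rw [h2]
      rw [mul_inv, mul_comm ((r e)⁻¹) ((θs a b)⁻¹), ← mul_assoc,
        mul_inv_cancel₀ (ne_of_gt hab), one_mul]
    · push_neg at hex
      have h1 : ∀ k : Fin n, (if e ∈ (P k).edges then (ρ k e)⁻¹ else 0) = 0 := by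
        intro k
        rw [if_neg (hex k)]
      rw [Finset.sum_congr rfl (fun k _ => h1 k), Finset.sum_const, smul_zero]
      exact inv_nonneg.2 (hr e he).le
  -- the value equals the minimal energy
  have hval : Es = ∑ k, (α k) ^ 2 * ∑ e ∈ (P k).edges.toFinset, ρ k e := by
    set w : Sym2 V → ℝ := fun e => ∑ k, (if e ∈ (P k).edges then α k else 0) with hwdef
    have hstep1 : ∀ k : Fin n,
        (α k) ^ 2 * ∑ e ∈ (P k).edges.toFinset, ρ k e
        = ∑ e : Sym2 V, (if e ∈ (P k).edges then α k * (r e * θabs e) else 0) := by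
      intro k
      rw [list_toFinset_sum ((P k).edges) (fun e => ρ k e), Finset.mul_sum]
      apply Finset.sum_congr rfl
      intro e _
      split_ifs with h
      · simp only [hρdef, if_pos h]
        field_simp [ne_of_gt (hα k)]
      · ring
    have hstep2 : ∑ k, (α k) ^ 2 * ∑ e ∈ (P k).edges.toFinset, ρ k e
        = ∑ e : Sym2 V, (r e * θabs e) * w e := by
      rw [Finset.sum_congr rfl (fun k _ => hstep1 k), Finset.sum_comm]
      apply Finset.sum_congr rfl
      intro e _
      simp only [hwdef]
      rw [Finset.mul_sum]
      apply Finset.sum_congr rfl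
      intro k _
      split_ifs with h
      · ring
      · ring
    have hstep3 : ∀ e : Sym2 V, (r e * θabs e) * w e =
        (Sym2.lift ⟨fun a b => θs a b ^ 2, by
          intro a b; show θs a b ^ 2 = θs b a ^ 2; rw [hanti a b]; ring⟩ e) * r e := by
      intro e
      induction e with
      | _ a b =>
        simp only [Sym2.lift_mk, hθabs_mk]
        by_cases hex : ∃ k, s(a, b) ∈ (P k).edges
        · obtain ⟨k0, hk0⟩ := hex
          rcases (edge_mem_iff_exists_dart (P k0) a b).1 hk0 with ⟨d, hd, hdp⟩ | ⟨d, hd, hdp⟩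
          · have hab : 0 < θs a b := by
              have := halign k0 d hd
              rwa [hdp] at this
            have h2 := hkey a b hab
            simp only [hwdef]
            rw [← h2, abs_of_pos hab]
            ring
          · have hba : 0 < θs b a := by
              have := halign k0 d hd
              rwa [hdp] at this
            have hab : θs a b < 0 := by
              have := hanti a b
              linarith
            have h2 := hkey b a hba
            rw [Sym2.eq_swap (a := b) (b := a)] at h2
            simp only [hwdef]
            rw [← h2, abs_of_neg hab]
            rw [hanti a b]
            ring
        · push_neg at hex
          have h0 : θs a b = 0 := hzero a b hex
          have hw0 : w s(a, b) = 0 := by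
            simp only [hwdef]
            exact Finset.sum_eq_zero fun k _ => if_neg (hex k)
          rw [h0, hw0]
          ring
    have hstep4 : Es = ∑ e : Sym2 V, (Sym2.lift ⟨fun a b => θs a b ^ 2, by
        intro a b; show θs a b ^ 2 = θs b a ^ 2; rw [hanti a b]; ring⟩ e) * r e := by
      apply flowEnergy_eq_sym2_sum hanti
      intro a b
      simp only [Sym2.lift_mk]
    rw [hstep4, hstep2]
    exact (Finset.sum_congr rfl fun e _ => hstep3 e).symm
  -- membership of Es in pathValues
  have hmem : Es ∈ pathValues G r u v :=
    ⟨n, P, α, ρ, hPp, hα, hαsum, hρpos, hcon, hval⟩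
  -- Es is a lower bound of pathValues
  have hlb : ∀ x ∈ pathValues G r u v, Es ≤ x := by
    rintro x ⟨m, P', α', ρ', hP', hα', hαsum', hρ', hcon', rfl⟩
    obtain ⟨θ, hθ, hE⟩ := exists_flow_le_pathValue huv hr P' α' ρ' hP' hα' hαsum' hρ' hcon'
    exact le_trans (hmin θ hθ) hE
  have hsInfPV : sInf (pathValues G r u v) = Es :=
    IsLeast.csInf_eq ⟨hmem, hlb⟩
  have hsInfE : effRes G r u v = Es := by
    apply IsLeast.csInf_eq
    constructor
    · exact ⟨θs, ⟨hanti, hsupp, hdiv, hstr⟩, rfl⟩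
    · rintro x ⟨θ, hθ, rfl⟩
      exact hmin θ hθ
  rw [hsInfPV, hsInfE]
  exact ⟨rfl, hmem⟩
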